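/- Let n be a positive integer and α ∈ [0,1). Let M_an, M_nn, M_aa and M_an', M_nn', M_aa' be n×n column stochastic real matrices, let β₀, β₁, β₂ be nonnegative reals with β₀ + β₁ + β₂ = 1, and set M = β₀ M_an + β₁ M_nn + β₂ M_aa and M' = β₀ M_an' + β₁ M_nn' + β₂ M_aa'. Let q ∈ ℝⁿ and p = ∑_{k=0}^∞ (α M)^k q. Then (i) the series ∑_{k=0}^∞ (α M')^k (α (M' − M) p) converges, and (ii) p + ∑_{k=0}^∞ (α M')^k (α (M' − M) p) = ∑_{k=0}^∞ (α M')^k q. (Convergence and exactness of the mixed dynamic propagation scheme.) -/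

import Mathlib

open Matrix BigOperators

section Aux
variable {n : ℕ}

def ColStoch (A : Matrix (Fin n) (Fin n) ℝ) : Prop :=
  (∀ i j, 0 ≤ A i j) ∧ ∀ j, ∑ i, A i j = 1

lemma colStoch_mul {A B : Matrix (Fin n) (Fin n) ℝ} (hA : ColStoch A) (hB : ColStoch B) :
    ColStoch (A * B) := by
  constructor
  · intro i j
    rw [Matrix.mul_apply]
    exact Finset.sum_nonneg fun k _ => mul_nonneg (hA.1 i k) (hB.1 k j)
  · intro j
    simp only [Matrix.mul_apply]
    rw [Finset.sum_comm]
    calc ∑ k, ∑ i, A i k * B k j = ∑ k, (∑ i, A i k) * B k j := by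
          simp [Finset.sum_mul]
      _ = ∑ k, B k j := by simp [hA.2]
      _ = 1 := hB.2 j

lemma colStoch_pow {A : Matrix (Fin n) (Fin n) ℝ} (hA : ColStoch A) (k : ℕ) :
    ColStoch (A ^ k) := by
  induction k with
  | zero =>
    constructor
    · intro i j
      simp [Matrix.one_apply]
      split <;> norm_num
    · intro j; simp [Matrix.one_apply]
  | succ k ih =>
    rw [pow_succ]
    exact colStoch_mul ih hA

lemma l1_mulVec_le {A : Matrix (Fin n) (Fin n) ℝ} (hA : ColStoch A) (v : Fin n → ℝ) :
    ∑ i, |(A *ᵥ v) i| ≤ ∑ i, |v i| := by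
  calc ∑ i, |(A *ᵥ v) i| ≤ ∑ i, ∑ j, A i j * |v j| := by
        apply Finset.sum_le_sum
        intro i _
        calc |(A *ᵥ v) i| = |∑ j, A i j * v j| := by rfl
          _ ≤ ∑ j, |A i j * v j| := Finset.abs_sum_le_sum_abs _ _
          _ = ∑ j, A i j * |v j| := by
              refine Finset.sum_congr rfl fun j _ => ?_
              rw [abs_mul, abs_of_nonneg (hA.1 i j)]
    _ = ∑ j, (∑ i, A i j) * |v j| := by rw [Finset.sum_comm]; simp [Finset.sum_mul]
    _ = ∑ j, |v j| := by simp [hA.2]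

lemma norm_le_l1 (v : Fin n → ℝ) : ‖v‖ ≤ ∑ i, |v i| := by
  rcases isEmpty_or_nonempty (Fin n) with h | h
  · simp [Subsingleton.elim v 0]
  · have hnn : (0:ℝ) ≤ ∑ i, |v i| := Finset.sum_nonneg fun i _ => abs_nonneg (v i)
    apply (pi_norm_le_iff_of_nonneg hnn).mpr
    intro i
    rw [Real.norm_eq_abs]
    exact Finset.single_le_sum (fun j _ => abs_nonneg (v j)) (Finset.mem_univ i)

lemma summable_geom {α : ℝ} (hα0 : 0 ≤ α) (hα1 : α < 1)
    {A : Matrix (Fin n) (Fin n) ℝ} (hA : ColStoch A) (v : Fin n → ℝ) :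
    Summable (fun k : ℕ => ((α • A) ^ k) *ᵥ v) := by
  apply Summable.of_norm_bounded (g := fun k => (∑ i, |v i|) * α ^ k)
  · exact (summable_geometric_of_lt_one hα0 hα1).mul_left _
  · intro k
    rw [smul_pow, Matrix.smul_mulVec, norm_smul]
    rw [Real.norm_eq_abs, abs_pow, abs_of_nonneg hα0, mul_comm]
    apply mul_le_mul_of_nonneg_right ?_ (pow_nonneg hα0 k)
    exact (norm_le_l1 _).trans (l1_mulVec_le (colStoch_pow hA k) v)

lemma tsum_neumann {α : ℝ} (hα0 : 0 ≤ α) (hα1 : α < 1)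
    {A : Matrix (Fin n) (Fin n) ℝ} (hA : ColStoch A) (u : Fin n → ℝ) :
    (∑' k : ℕ, ((α • A) ^ k) *ᵥ u) - (α • A) *ᵥ (∑' k : ℕ, ((α • A) ^ k) *ᵥ u) = u := by
  have hs := summable_geom hα0 hα1 hA u
  have hmap : (α • A) *ᵥ (∑' k : ℕ, ((α • A) ^ k) *ᵥ u)
      = ∑' k : ℕ, ((α • A) ^ (k + 1)) *ᵥ u := by
    have := (LinearMap.toContinuousLinearMap ((α • A).mulVecLin)).map_tsum hs
    simp only [LinearMap.coe_toContinuousLinearMap', Matrix.mulVecLin_apply] at this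
    rw [this]
    congr 1
    ext k
    rw [Matrix.mulVec_mulVec, ← pow_succ']
  rw [hmap, hs.tsum_eq_zero_add]
  simp [Matrix.one_mulVec]

lemma fixed_zero {α : ℝ} (hα0 : 0 ≤ α) (hα1 : α < 1)
    {A : Matrix (Fin n) (Fin n) ℝ} (hA : ColStoch A) {v : Fin n → ℝ}
    (hv : v = (α • A) *ᵥ v) : v = 0 := by
  have h1 : ∑ i, |v i| ≤ α * ∑ i, |v i| := by
    conv_lhs => rw [hv]
    rw [Matrix.smul_mulVec]
    calc ∑ i, |(α • (A *ᵥ v)) i| = ∑ i, α * |(A *ᵥ v) i| := by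
          refine Finset.sum_congr rfl fun i _ => ?_
          simp [abs_mul, abs_of_nonneg hα0]
      _ = α * ∑ i, |(A *ᵥ v) i| := by rw [Finset.mul_sum]
      _ ≤ α * ∑ i, |v i| := mul_le_mul_of_nonneg_left (l1_mulVec_le hA v) hα0
  have h2 : 0 ≤ ∑ i, |v i| := Finset.sum_nonneg fun i _ => abs_nonneg _
  have h3 : ∑ i, |v i| = 0 := by nlinarith
  funext i
  have := Finset.sum_eq_zero_iff_of_nonneg (fun j _ => abs_nonneg (v j)) |>.mp h3 i (Finset.mem_univ i)
  simpa [abs_eq_zero] using this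

end Aux


/-- (Convergence and exactness of the mixed dynamic propagation scheme.)
With `M` and `M'` convex combinations (weights `β₀ + β₁ + β₂ = 1`) of column stochastic
matrices, `α ∈ [0,1)`, `q ∈ ℝⁿ` and `p = ∑_{k=0}^∞ (α M)^k q`, the pushout series
`∑_{k=0}^∞ (α M')^k (α (M' − M) p)` converges, and
`p + ∑_{k=0}^∞ (α M')^k (α (M' − M) p) = ∑_{k=0}^∞ (α M')^k q`. -/
theorem mixed_dynamic_propagation
    (n : ℕ) (hn : 0 < n)
    (α : ℝ) (hα0 : 0 ≤ α) (hα1 : α < 1)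
    (Man Mnn Maa Man' Mnn' Maa' : Matrix (Fin n) (Fin n) ℝ)
    (hMan : (∀ i j, 0 ≤ Man i j) ∧ ∀ j, ∑ i, Man i j = 1)
    (hMnn : (∀ i j, 0 ≤ Mnn i j) ∧ ∀ j, ∑ i, Mnn i j = 1)
    (hMaa : (∀ i j, 0 ≤ Maa i j) ∧ ∀ j, ∑ i, Maa i j = 1)
    (hMan' : (∀ i j, 0 ≤ Man' i j) ∧ ∀ j, ∑ i, Man' i j = 1)
    (hMnn' : (∀ i j, 0 ≤ Mnn' i j) ∧ ∀ j, ∑ i, Mnn' i j = 1)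
    (hMaa' : (∀ i j, 0 ≤ Maa' i j) ∧ ∀ j, ∑ i, Maa' i j = 1)
    (β₀ β₁ β₂ : ℝ) (hβ₀ : 0 ≤ β₀) (hβ₁ : 0 ≤ β₁) (hβ₂ : 0 ≤ β₂)
    (hβsum : β₀ + β₁ + β₂ = 1)
    (M M' : Matrix (Fin n) (Fin n) ℝ)
    (hM : M = β₀ • Man + β₁ • Mnn + β₂ • Maa)
    (hM' : M' = β₀ • Man' + β₁ • Mnn' + β₂ • Maa')
    (q : Fin n → ℝ)
    (p : Fin n → ℝ) (hp : p = ∑' k : ℕ, ((α • M) ^ k) *ᵥ q) :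
    Summable (fun k : ℕ => ((α • M') ^ k) *ᵥ (α • ((M' - M) *ᵥ p))) ∧
      p + (∑' k : ℕ, ((α • M') ^ k) *ᵥ (α • ((M' - M) *ᵥ p))) =
        ∑' k : ℕ, ((α • M') ^ k) *ᵥ q := by
  have stoch : ∀ {A B C : Matrix (Fin n) (Fin n) ℝ},
      ColStoch A → ColStoch B → ColStoch C →
      ColStoch (β₀ • A + β₁ • B + β₂ • C) := by
    intro A B C hA hB hC
    constructor
    · intro i j
      simp only [Matrix.add_apply, Matrix.smul_apply, smul_eq_mul]
      have h1 := mul_nonneg hβ₀ (hA.1 i j)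
      have h2 := mul_nonneg hβ₁ (hB.1 i j)
      have h3 := mul_nonneg hβ₂ (hC.1 i j)
      linarith
    · intro j
      simp only [Matrix.add_apply, Matrix.smul_apply, smul_eq_mul,
        Finset.sum_add_distrib, ← Finset.mul_sum, hA.2, hB.2, hC.2, mul_one]
      exact hβsum
  have hMs : ColStoch M := hM ▸ stoch hMan hMnn hMaa
  have hMs' : ColStoch M' := hM' ▸ stoch hMan' hMnn' hMaa'
  set w := α • ((M' - M) *ᵥ p) with hw
  have hq : p - (α • M) *ᵥ p = q := by rw [hp]; exact tsum_neumann hα0 hα1 hMs q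
  have hu : p - (α • M') *ᵥ p = q - w := by
    rw [← hq, hw]
    have hcalc : α • ((M' - M) *ᵥ p) = (α • M') *ᵥ p - (α • M) *ᵥ p := by
      rw [Matrix.sub_mulVec, smul_sub, Matrix.smul_mulVec, Matrix.smul_mulVec]
    rw [hcalc]; abel
  have hsum_w : Summable (fun k : ℕ => ((α • M') ^ k) *ᵥ w) := summable_geom hα0 hα1 hMs' w
  have hsum_u : Summable (fun k : ℕ => ((α • M') ^ k) *ᵥ (q - w)) :=
    summable_geom hα0 hα1 hMs' (q - w)
  set s := ∑' k : ℕ, ((α • M') ^ k) *ᵥ (q - w) with hs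
  have hsfix : s - (α • M') *ᵥ s = q - w := tsum_neumann hα0 hα1 hMs' (q - w)
  have hps : p = s := by
    have hdiff : p - s = (α • M') *ᵥ (p - s) := by
      rw [Matrix.mulVec_sub]
      exact sub_eq_sub_iff_sub_eq_sub.mp (hu.trans hsfix.symm)
    have := fixed_zero hα0 hα1 hMs' hdiff
    exact sub_eq_zero.mp this
  refine ⟨hsum_w, ?_⟩
  calc p + ∑' k : ℕ, ((α • M') ^ k) *ᵥ w
      = s + ∑' k : ℕ, ((α • M') ^ k) *ᵥ w := by rw [hps]
    _ = ∑' k : ℕ, (((α • M') ^ k) *ᵥ (q - w) + ((α • M') ^ k) *ᵥ w) :=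
        (Summable.tsum_add hsum_u hsum_w).symm
    _ = ∑' k : ℕ, ((α • M') ^ k) *ᵥ q := by
        refine tsum_congr fun k => ?_
        rw [← Matrix.mulVec_add, sub_add_cancel]
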